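/- Let c_1,...,c_{2m} be real numbers with empirical mean μ̂ and population standard deviation σ̂ > 0. Then the effect size d = ((1/m)Σ_{i=1}^m c_i − (1/m)Σ_{i=m+1}^{2m} c_i)/σ̂ satisfies |d| ≤ 2. -/
import Mathlib


/-- The WEAT effect size for two groups of equal size m is bounded by 2 in
absolute value. -/
theorem weat_effect_size_bound (m : ℕ) (hm : 0 < m) (c : ℕ → ℝ) (μ σ : ℝ)
    (hμ : μ = (∑ i ∈ Finset.range (2 * m), c i) / (2 * m))
    (hσ : σ = Real.sqrt ((∑ i ∈ Finset.range (2 * m), (c i - μ) ^ 2) / (2 * m)))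
    (hσpos : 0 < σ) :
    |((∑ i ∈ Finset.range m, c i) / m - (∑ i ∈ Finset.Ico m (2 * m), c i) / m) / σ| ≤ 2 := by
  have hmR : (0:ℝ) < m := by positivity
  set A : ℝ := ∑ i ∈ Finset.range m, (c i - μ) with hA
  set B : ℝ := ∑ i ∈ Finset.Ico m (2*m), (c i - μ) with hB
  set S₁ : ℝ := ∑ i ∈ Finset.range m, (c i - μ)^2 with hS₁
  set S₂ : ℝ := ∑ i ∈ Finset.Ico m (2*m), (c i - μ)^2 with hS₂
  have hcard : (Finset.Ico m (2*m)).card = m := by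
    rw [Nat.card_Ico]; omega
  have hA2 : A^2 ≤ m * S₁ := by
    have h := sq_sum_le_card_mul_sum_sq (s := Finset.range m) (f := fun i => c i - μ)
    rwa [Finset.card_range] at h
  have hB2 : B^2 ≤ m * S₂ := by
    have := sq_sum_le_card_mul_sum_sq (s := Finset.Ico m (2*m)) (f := fun i => c i - μ)
    rwa [hcard] at this
  have hsplit : S₁ + S₂ = ∑ i ∈ Finset.range (2*m), (c i - μ)^2 := by
    rw [hS₁, hS₂]
    simp only [Finset.range_eq_Ico]
    exact Finset.sum_Ico_consecutive _ (Nat.zero_le m) (by omega)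
  have hSnonneg : 0 ≤ ∑ i ∈ Finset.range (2*m), (c i - μ)^2 := by positivity
  have hσ2 : σ^2 = (S₁ + S₂) / (2*m) := by
    rw [hσ, Real.sq_sqrt (by positivity), hsplit]
  have hS : S₁ + S₂ = 2 * m * σ^2 := by
    rw [hσ2]; field_simp
  have hABsq : (A - B)^2 ≤ (2*m*σ)^2 := by nlinarith [sq_nonneg (A + B)]
  have habs : |A - B| ≤ 2*m*σ := abs_le_of_sq_le_sq hABsq (by positivity)
  have hnum : (∑ i ∈ Finset.range m, c i) / m - (∑ i ∈ Finset.Ico m (2*m), c i) / m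
      = (A - B) / m := by
    rw [hA, hB, Finset.sum_sub_distrib, Finset.sum_sub_distrib, Finset.sum_const,
      Finset.sum_const, hcard, Finset.card_range]
    ring
  rw [hnum, abs_div, abs_div, abs_of_pos hσpos, abs_of_pos hmR, div_div]
  rw [div_le_iff₀ (by positivity)]
  calc |A - B| ≤ 2*m*σ := habs
    _ = 2 * (m * σ) := by ring
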